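/- The map g : S^3 → S^3 defined by g(z) = √j · j z j⁻¹ (with √j = (1+j)/√2) acts freely: for every z ∈ S^3 and every k with 1 ≤ k ≤ 7, g^k(z) ≠ z. -/

import Mathlib

noncomputable section

/-- The quaternion `j`. -/
def qj : Quaternion ℝ := ⟨0, 0, 1, 0⟩

/-- The quaternion `√j = (1 + j)/√2`. -/
def sqrtj : Quaternion ℝ := (1 + qj) / ((Real.sqrt 2 : ℝ) : Quaternion ℝ)

/-- The map `g : z ↦ √j · (j z j⁻¹)`. -/
def g (z : Quaternion ℝ) : Quaternion ℝ := sqrtj * (qj * z * qj⁻¹)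

lemma qj_re : qj.re = 0 := rfl
lemma qj_imI : qj.imI = 0 := rfl
lemma qj_imJ : qj.imJ = 1 := rfl
lemma qj_imK : qj.imK = 0 := rfl

lemma qj_inv : qj⁻¹ = -qj := by
  apply inv_eq_of_mul_eq_one_right
  ext <;> simp [qj_re, qj_imI, qj_imJ, qj_imK, Quaternion.re_mul, Quaternion.imI_mul,
    Quaternion.imJ_mul, Quaternion.imK_mul, Quaternion.re_one, Quaternion.imI_one,
    Quaternion.imJ_one, Quaternion.imK_one]

lemma sqrtj_eq : sqrtj = ⟨1/Real.sqrt 2, 0, 1/Real.sqrt 2, 0⟩ := by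
  rw [sqrtj, div_eq_mul_inv]
  ext <;> simp [qj_re, qj_imI, qj_imJ, qj_imK, ← Quaternion.coe_inv, Quaternion.re_mul,
    Quaternion.imI_mul, Quaternion.imJ_mul, Quaternion.imK_mul, Quaternion.re_one, Quaternion.imI_one,
    Quaternion.imJ_one, Quaternion.imK_one]

lemma hs0 : Real.sqrt 2 ≠ 0 := by positivity

lemma hs2 : Real.sqrt 2 * Real.sqrt 2 = 2 := Real.mul_self_sqrt (by norm_num)

lemma hs1 : 1 < Real.sqrt 2 := by nlinarith [hs2, Real.sqrt_nonneg 2]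

lemma g_comp (z : Quaternion ℝ) :
    g z = ⟨(z.re - z.imJ)/Real.sqrt 2, (-z.imI - z.imK)/Real.sqrt 2,
      (z.re + z.imJ)/Real.sqrt 2, (z.imI - z.imK)/Real.sqrt 2⟩ := by
  have e1 : sqrtj.re = 1/Real.sqrt 2 := by rw [sqrtj_eq]
  have e2 : sqrtj.imI = 0 := by rw [sqrtj_eq]
  have e3 : sqrtj.imJ = 1/Real.sqrt 2 := by rw [sqrtj_eq]
  have e4 : sqrtj.imK = 0 := by rw [sqrtj_eq]
  rw [g, qj_inv]
  ext <;> simp [qj_re, qj_imI, qj_imJ, qj_imK, e1, e2, e3, e4, Quaternion.re_mul,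
    Quaternion.imI_mul, Quaternion.imJ_mul, Quaternion.imK_mul] <;> ring

lemma g2 (z : Quaternion ℝ) : g (g z) = ⟨-z.imJ, z.imK, z.re, -z.imI⟩ := by
  rw [g_comp, g_comp]
  ext <;> field_simp <;> rw [Real.sq_sqrt (by norm_num)] <;> ring

lemma aux1 {X : ℝ} (hX : 0 ≤ X) (h : X = Real.sqrt 2 * X) : X = 0 := by
  have h2 : (Real.sqrt 2 - 1) * X = 0 := by linear_combination -h
  rcases mul_eq_zero.1 h2 with h3 | h3
  · nlinarith [hs1]
  · exact h3

lemma aux2 {X : ℝ} (hX : 0 ≤ X) (h : -X = Real.sqrt 2 * X) : X = 0 := by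
  nlinarith [Real.sqrt_nonneg 2, hX, h]

/-- The map `g : z ↦ √j · (j z j⁻¹)` acts freely on the unit quaternions:
`g^k(z) ≠ z` for every unit quaternion `z` and every `1 ≤ k ≤ 7`. -/
theorem g_free (z : Quaternion ℝ) (hz : ‖z‖ = 1) :
    ∀ k : ℕ, 1 ≤ k → k ≤ 7 → g^[k] z ≠ z := by
  have hn : z.re^2 + z.imI^2 + z.imJ^2 + z.imK^2 = 1 := by
    have h1 : Quaternion.normSq z = 1 := by
      rw [Quaternion.normSq_eq_norm_mul_self, hz]; norm_num
    rw [Quaternion.normSq_def'] at h1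
    linarith [h1]
  intro k hk1 hk7 heq
  interval_cases k <;>
    simp only [Function.iterate_succ, Function.iterate_zero, Function.comp_apply,
      id_eq] at heq
  -- k = 1
  · rw [g_comp] at heq
    replace heq := Quaternion.ext_iff.mp heq
    obtain ⟨h1, h2, h3, h4⟩ := heq
    field_simp at h1 h2 h3 h4
    have e1 : z.re^2 + z.imJ^2 = Real.sqrt 2 * (z.re^2 + z.imJ^2) := by
      linear_combination z.re*h1 + z.imJ*h3
    have e2 : -(z.imI^2 + z.imK^2) = Real.sqrt 2 * (z.imI^2 + z.imK^2) := by
      linear_combination z.imI*h2 + z.imK*h4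
    have hX := aux1 (by positivity) e1
    have hY := aux2 (by positivity) e2
    linarith [hn, hX, hY]
  -- k = 2
  · rw [g2] at heq
    replace heq := Quaternion.ext_iff.mp heq
    simp only at heq
    obtain ⟨h1, h2, h3, h4⟩ := heq
    have ha : z.re = 0 := by linarith
    have hc : z.imJ = 0 := by linarith
    have hb : z.imI = 0 := by linarith
    have hd : z.imK = 0 := by linarith
    rw [ha, hb, hc, hd] at hn; norm_num at hn
  -- k = 3
  · rw [g2, g_comp] at heq
    replace heq := Quaternion.ext_iff.mp heq
    obtain ⟨h1, h2, h3, h4⟩ := heq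
    field_simp at h1 h2 h3 h4
    have e1 : -(z.re^2 + z.imJ^2) = Real.sqrt 2 * (z.re^2 + z.imJ^2) := by
      linear_combination z.re*h1 + z.imJ*h3
    have e2 : z.imI^2 + z.imK^2 = Real.sqrt 2 * (z.imI^2 + z.imK^2) := by
      linear_combination z.imI*h2 + z.imK*h4
    have hX := aux2 (by positivity) e1
    have hY := aux1 (by positivity) e2
    linarith [hn, hX, hY]
  -- k = 4
  · rw [g2, g2] at heq
    replace heq := Quaternion.ext_iff.mp heq
    simp only at heq
    obtain ⟨h1, h2, h3, h4⟩ := heq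
    have ha : z.re = 0 := by linarith
    have hb : z.imI = 0 := by linarith
    have hc : z.imJ = 0 := by linarith
    have hd : z.imK = 0 := by linarith
    rw [ha, hb, hc, hd] at hn; norm_num at hn
  -- k = 5
  · rw [g2, g2, g_comp] at heq
    replace heq := Quaternion.ext_iff.mp heq
    obtain ⟨h1, h2, h3, h4⟩ := heq
    field_simp at h1 h2 h3 h4
    have e1 : -(z.re^2 + z.imJ^2) = Real.sqrt 2 * (z.re^2 + z.imJ^2) := by
      linear_combination z.re*h1 + z.imJ*h3
    have e2 : z.imI^2 + z.imK^2 = Real.sqrt 2 * (z.imI^2 + z.imK^2) := by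
      linear_combination z.imI*h2 + z.imK*h4
    have hX := aux2 (by positivity) e1
    have hY := aux1 (by positivity) e2
    linarith [hn, hX, hY]
  -- k = 6
  · rw [g2, g2, g2] at heq
    replace heq := Quaternion.ext_iff.mp heq
    simp only at heq
    obtain ⟨h1, h2, h3, h4⟩ := heq
    have ha : z.re = 0 := by linarith
    have hc : z.imJ = 0 := by linarith
    have hb : z.imI = 0 := by linarith
    have hd : z.imK = 0 := by linarith
    rw [ha, hb, hc, hd] at hn; norm_num at hn
  -- k = 7
  · rw [g2, g2, g2, g_comp] at heq
    replace heq := Quaternion.ext_iff.mp heq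
    obtain ⟨h1, h2, h3, h4⟩ := heq
    field_simp at h1 h2 h3 h4
    have e1 : z.re^2 + z.imJ^2 = Real.sqrt 2 * (z.re^2 + z.imJ^2) := by
      linear_combination z.re*h1 + z.imJ*h3
    have e2 : -(z.imI^2 + z.imK^2) = Real.sqrt 2 * (z.imI^2 + z.imK^2) := by
      linear_combination z.imI*h2 + z.imK*h4
    have hX := aux1 (by positivity) e1
    have hY := aux2 (by positivity) e2
    linarith [hn, hX, hY]
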